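/- For every n : ℕ and every 2-AND-OR-BN F on n nodes, if F is observable with an observation set S of size m, then (m : ℝ) ≥ 0.188 * n. -/

import Mathlib

/-- `F` is observable with observation set `S` if the map from an initial state to its
output sequence (the restriction of each iterate to `S`) is injective. -/
def observable {n : ℕ} (F : (Fin n → Bool) → (Fin n → Bool)) (S : Finset (Fin n)) : Prop :=
  Function.Injective (fun (x : Fin n → Bool) => fun (t : ℕ) (i : S) => (F^[t] x) i.val)

/-- `F` is a `K`-AND-OR-BN: each local function is the AND or the OR of `K` literals
on pairwise distinct variables (a literal is `x_{i_j} XOR b_j`). -/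
def isAndOrBN {n : ℕ} (K : ℕ) (F : (Fin n → Bool) → (Fin n → Bool)) : Prop :=
  ∀ i : Fin n, ∃ idx : Fin K → Fin n, Function.Injective idx ∧ ∃ b : Fin K → Bool,
    (∀ x, F x i = Finset.univ.inf (fun j => Bool.xor (x (idx j)) (b j))) ∨
    (∀ x, F x i = Finset.univ.sup (fun j => Bool.xor (x (idx j)) (b j)))

open Finset Real

section Aux

lemma card_two_fixed {n : ℕ} {a b : Fin n} (hab : a ≠ b) (c d : Bool) :
    (Finset.univ.filter (fun x : Fin n → Bool => x a = c ∧ x b = d)).card = 2 ^ (n - 2) := by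
  classical
  rw [← Fintype.card_subtype]
  have e : {x : Fin n → Bool // x a = c ∧ x b = d} ≃ ({i : Fin n // i ≠ a ∧ i ≠ b} → Bool) :=
    { toFun := fun x i => x.1 i.1
      invFun := fun y => ⟨fun i => if h1 : i = a then c else if h2 : i = b then d
          else y ⟨i, ⟨h1, h2⟩⟩, by simp, by simp [Ne.symm hab]⟩
      left_inv := by
        rintro ⟨x, hx1, hx2⟩
        ext i
        by_cases h1 : i = a
        · simp [h1, hx1]
        · by_cases h2 : i = b
          · simp [h1, h2, hx2, Ne.symm hab]
          · simp [h1, h2]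
      right_inv := by
        intro y
        funext i
        simp [i.2.1, i.2.2] }
  rw [Fintype.card_congr e, Fintype.card_fun]
  congr 1
  rw [Fintype.card_subtype]
  have : Finset.univ.filter (fun i : Fin n => i ≠ a ∧ i ≠ b) = ({a, b} : Finset (Fin n))ᶜ := by
    ext i; simp [not_or]
  rw [this, Finset.card_compl, Finset.card_insert_of_notMem (by simpa using hab),
    Finset.card_singleton, Fintype.card_fin]

lemma inf_fin2 (f : Fin 2 → Bool) : Finset.univ.inf f = (f 0 && f 1) := by
  have : (Finset.univ : Finset (Fin 2)) = {0, 1} := by decide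
  rw [this, Finset.inf_insert, Finset.inf_singleton]; rfl

lemma sup_fin2 (f : Fin 2 → Bool) : Finset.univ.sup f = (f 0 || f 1) := by
  have : (Finset.univ : Finset (Fin 2)) = {0, 1} := by decide
  rw [this, Finset.sup_insert, Finset.sup_singleton]; rfl

lemma xor_true_eq {u c : Bool} (h : (u ^^ c) = true) : u = !c := by
  cases u <;> cases c <;> simp_all

lemma xor_false_eq {u c : Bool} (h : (u ^^ c) = false) : u = c := by
  cases u <;> cases c <;> simp_all

lemma pair_injective {n : ℕ} {F : (Fin n → Bool) → (Fin n → Bool)} {S : Finset (Fin n)}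
    (hobs : observable F S) :
    Function.Injective (fun x : Fin n → Bool => ((fun i : S => x i.val), F x)) := by
  intro x y h
  have h1 : (fun i : S => x i.val) = (fun i : S => y i.val) := congrArg Prod.fst h
  have h2 : F x = F y := congrArg Prod.snd h
  apply hobs
  funext t
  cases t with
  | zero => simpa using h1
  | succ t => simp only [Function.iterate_succ_apply, h2]

lemma log2_3_bound : 198 * Real.log 2 ≤ 125 * Real.log 3 := by
  have h : ((2:ℝ)^(198:ℕ)) ≤ 3^(125:ℕ) := by norm_num
  have := Real.log_le_log (by positivity) h
  rw [Real.log_pow, Real.log_pow] at this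
  exact_mod_cast this

end Aux

theorem two_and_or_lower_bound (n m : ℕ) (F : (Fin n → Bool) → (Fin n → Bool))
    (S : Finset (Fin n)) (hF : isAndOrBN 2 F) (hS : S.card = m)
    (hobs : observable F S) :
    (m : ℝ) ≥ 0.188 * n := by
  classical
  rcases Nat.lt_or_ge n 2 with hn | hn
  · interval_cases n
    · norm_num
    · exfalso
      obtain ⟨idx, hinj, -⟩ := hF 0
      have h := Fintype.card_le_of_injective idx hinj
      simp [Fintype.card_fin] at h
  choose idx hinj b hor using hF
  have hne : ∀ i : Fin n, idx i 0 ≠ idx i 1 := by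
    intro i h
    have := hinj i h
    simp at this
  set rare : Fin n → Bool := fun i =>
    if (∀ x, F x i = Finset.univ.inf (fun j => Bool.xor (x (idx i j)) (b i j)))
      then true else false with hrare
  set q : Fin n → Bool → ℝ := fun i v => if v = rare i then 1/4 else 3/4 with hq
  have qpos : ∀ i v, 0 < q i v := by
    intro i v; simp only [hq]; split <;> norm_num
  have qsum : ∀ i, q i true + q i false = 1 := by
    intro i; simp only [hq]
    rcases Bool.eq_false_or_eq_true (rare i) with h | h <;> simp [h] <;> norm_num
  -- the count lemma
  have hcount : ∀ i, ((Finset.univ.filter (fun x => F x i = rare i)).card : ℕ) ≤ 2 ^ (n - 2) := by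
    intro i
    by_cases hc : (∀ x, F x i = Finset.univ.inf (fun j => Bool.xor (x (idx i j)) (b i j)))
    · have hr : rare i = true := by simp [hrare, hc]
      rw [← card_two_fixed (hne i) (!(b i 0)) (!(b i 1))]
      apply Finset.card_le_card
      intro x hx
      simp only [Finset.mem_filter, Finset.mem_univ, true_and] at hx ⊢
      rw [hr, hc x, inf_fin2] at hx
      rcases Bool.and_eq_true_iff.mp hx with ⟨h1, h2⟩
      exact ⟨xor_true_eq h1, xor_true_eq h2⟩
    · have hr : rare i = false := by simp [hrare, hc]
      have hs' := (hor i).resolve_left hc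
      rw [← card_two_fixed (hne i) (b i 0) (b i 1)]
      apply Finset.card_le_card
      intro x hx
      simp only [Finset.mem_filter, Finset.mem_univ, true_and] at hx ⊢
      rw [hr, hs' x, sup_fin2] at hx
      rcases Bool.or_eq_false_iff.mp hx with ⟨h1, h2⟩
      exact ⟨xor_false_eq h1, xor_false_eq h2⟩
  -- weight function
  set W : (Fin n → Bool) → ℝ := fun x => (1/2)^m * ∏ i, q i (F x i) with hW
  have hWpos : ∀ x, 0 < W x := by
    intro x
    exact mul_pos (by positivity) (Finset.prod_pos (fun i _ => qpos i _))
  -- sum of weights at most 1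
  have hsumW : ∑ x : Fin n → Bool, W x ≤ 1 := by
    set w : (↥S → Bool) × (Fin n → Bool) → ℝ :=
      fun p => (1/2)^m * ∏ i, q i (p.2 i) with hw
    have hwpos : ∀ p, 0 < w p := by
      intro p
      exact mul_pos (by positivity) (Finset.prod_pos (fun i _ => qpos i _))
    set G : (Fin n → Bool) → (↥S → Bool) × (Fin n → Bool) :=
      fun x => ((fun i : S => x i.val), F x) with hG
    have hGinj := pair_injective hobs
    have e1 : ∑ x : Fin n → Bool, W x = ∑ p ∈ Finset.univ.image G, w p := by
      rw [Finset.sum_image (fun x _ y _ h => hGinj h)]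
    have e2 : ∑ p ∈ Finset.univ.image G, w p ≤ ∑ p, w p :=
      Finset.sum_le_sum_of_subset_of_nonneg (Finset.subset_univ _)
        (fun p _ _ => (hwpos p).le)
    have e3 : ∑ p, w p = 1 := by
      rw [Fintype.sum_prod_type]
      have inner : ∑ z : Fin n → Bool, ((1:ℝ)/2)^m * ∏ i, q i (z i)
          = (1/2)^m * ∑ z : Fin n → Bool, ∏ i, q i (z i) := by
        rw [Finset.mul_sum]
      have prodsum : ∑ z : Fin n → Bool, ∏ i, q i (z i) = 1 := by
        have := Finset.prod_univ_sum (fun _ : Fin n => (Finset.univ : Finset Bool)) q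
        rw [Fintype.piFinset_univ] at this
        rw [← this]
        refine Finset.prod_eq_one (fun i _ => ?_)
        rw [Fintype.sum_bool]
        exact qsum i
      calc ∑ _s : (↥S → Bool), ∑ z : Fin n → Bool, w (_s, z)
          = ∑ _s : (↥S → Bool), ((1:ℝ)/2)^m := by
            refine Finset.sum_congr rfl (fun s _ => ?_)
            simp only [hw]
            rw [inner, prodsum, mul_one]
        _ = (Fintype.card (↥S → Bool) : ℝ) * (1/2)^m := by
            rw [Finset.sum_const, nsmul_eq_mul, Finset.card_univ]
        _ = 1 := by
            rw [Fintype.card_fun, Fintype.card_coe, hS, Fintype.card_bool]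
            push_cast
            rw [one_div, inv_pow, mul_inv_cancel₀ (by positivity)]
    calc ∑ x : Fin n → Bool, W x = ∑ p ∈ Finset.univ.image G, w p := e1
      _ ≤ ∑ p, w p := e2
      _ = 1 := e3
  -- setup constants
  have hn2 : n - 2 + 2 = n := Nat.sub_add_cancel hn
  set A : ℝ := (2:ℝ)^(n-2) with hA
  have hApos : 0 < A := by positivity
  have hN4A : (2:ℝ)^n = 4 * A := by
    conv_lhs => rw [← hn2]
    rw [pow_add, hA]; ring
  have hcardU : (Finset.univ : Finset (Fin n → Bool)).card = 2^n := by
    rw [Finset.card_univ, Fintype.card_fun, Fintype.card_bool, Fintype.card_fin]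
  have hcard' : (((Finset.univ : Finset (Fin n → Bool)).card : ℕ) : ℝ) = (2:ℝ)^n := by
    rw [hcardU]; push_cast; ring
  -- per-node marginal bound
  have hmarg : ∀ i : Fin n, A * Real.log (1/4) + ((2:ℝ)^n - A) * Real.log (3/4)
      ≤ ∑ x : Fin n → Bool, Real.log (q i (F x i)) := by
    intro i
    have hNi_le : (Finset.univ.filter (fun x => F x i = rare i)).card ≤ 2^n := by
      calc (Finset.univ.filter (fun x => F x i = rare i)).card
          ≤ (Finset.univ : Finset (Fin n → Bool)).card := Finset.card_filter_le _ _
        _ = 2^n := hcardU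
    set Ni := (Finset.univ.filter (fun x => F x i = rare i)).card with hNi
    have hsplit : ∑ x : Fin n → Bool, Real.log (q i (F x i))
        = (Ni:ℝ) * Real.log (1/4) + ((2:ℝ)^n - (Ni:ℝ)) * Real.log (3/4) := by
      rw [← Finset.sum_filter_add_sum_filter_not Finset.univ (fun x => F x i = rare i)]
      have c1 : ∀ x ∈ Finset.univ.filter (fun x => F x i = rare i),
          Real.log (q i (F x i)) = Real.log (1/4) := by
        intro x hx
        rw [(Finset.mem_filter.mp hx).2]
        simp [hq]
      have c2 : ∀ x ∈ Finset.univ.filter (fun x => ¬ F x i = rare i),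
          Real.log (q i (F x i)) = Real.log (3/4) := by
        intro x hx
        have hne' := (Finset.mem_filter.mp hx).2
        have : q i (F x i) = 3/4 := by simp [hq, hne']
        rw [this]
      rw [Finset.sum_congr rfl c1, Finset.sum_congr rfl c2, Finset.sum_const,
        Finset.sum_const, nsmul_eq_mul, nsmul_eq_mul]
      have hcard2 : (Finset.univ.filter (fun x => ¬ F x i = rare i)).card = 2^n - Ni := by
        have hpart := Finset.card_filter_add_card_filter_not
          (s := (Finset.univ : Finset (Fin n → Bool))) (p := fun x => F x i = rare i)
        omega
      rw [hcard2, Nat.cast_sub hNi_le]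
      push_cast
      ring
    rw [hsplit]
    have hlog14 : Real.log (1/4) ≤ Real.log (3/4) := Real.log_le_log (by norm_num) (by norm_num)
    have hNiA : (Ni:ℝ) ≤ A := by rw [hA]; exact_mod_cast hcount i
    nlinarith [mul_nonneg (sub_nonneg.2 hNiA) (sub_nonneg.2 hlog14)]
  -- Jensen's inequality
  have hJ := ConcaveOn.le_map_sum (f := Real.log) (s := Set.Ioi 0)
      (t := (Finset.univ : Finset (Fin n → Bool))) (w := fun _ => ((2:ℝ)^n)⁻¹) (p := W)
      strictConcaveOn_log_Ioi.concaveOn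
      (fun x _ => by positivity)
      (by rw [Finset.sum_const, nsmul_eq_mul, hcard', mul_inv_cancel₀ (by positivity)])
      (fun x _ => Set.mem_Ioi.mpr (hWpos x))
  have hsumWpos : 0 < ∑ x : Fin n → Bool, W x :=
    Finset.sum_pos (fun x _ => hWpos x) Finset.univ_nonempty
  have hRHS : Real.log (∑ x : Fin n → Bool, ((2:ℝ)^n)⁻¹ • W x) ≤ -((n:ℝ) * Real.log 2) := by
    have e1 : ∑ x : Fin n → Bool, ((2:ℝ)^n)⁻¹ • W x = ((2:ℝ)^n)⁻¹ * ∑ x : Fin n → Bool, W x := by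
      rw [Finset.mul_sum]
      simp [smul_eq_mul]
    rw [e1]
    have e2 : ((2:ℝ)^n)⁻¹ * ∑ x : Fin n → Bool, W x ≤ ((2:ℝ)^n)⁻¹ := by
      calc ((2:ℝ)^n)⁻¹ * ∑ x : Fin n → Bool, W x ≤ ((2:ℝ)^n)⁻¹ * 1 :=
            mul_le_mul_of_nonneg_left hsumW (by positivity)
        _ = ((2:ℝ)^n)⁻¹ := mul_one _
    calc Real.log (((2:ℝ)^n)⁻¹ * ∑ x : Fin n → Bool, W x) ≤ Real.log (((2:ℝ)^n)⁻¹) :=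
          Real.log_le_log (by positivity) e2
      _ = -((n:ℝ) * Real.log 2) := by rw [Real.log_inv, Real.log_pow]
  have hLHS : ∑ x : Fin n → Bool, ((2:ℝ)^n)⁻¹ • Real.log (W x)
      = ((2:ℝ)^n)⁻¹ * ∑ x : Fin n → Bool, Real.log (W x) := by
    rw [Finset.mul_sum]
    simp [smul_eq_mul]
  have hlogW : ∀ x, Real.log (W x) = (m:ℝ) * Real.log (1/2) + ∑ i, Real.log (q i (F x i)) := by
    intro x
    rw [hW]
    rw [Real.log_mul (by positivity) (ne_of_gt (Finset.prod_pos (fun i _ => qpos i _))),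
      Real.log_pow, Real.log_prod (fun i _ => ne_of_gt (qpos i _))]
  have hSlogEq : ∑ x : Fin n → Bool, Real.log (W x)
      = (2:ℝ)^n * ((m:ℝ) * Real.log (1/2)) + ∑ i : Fin n, ∑ x : Fin n → Bool, Real.log (q i (F x i)) := by
    rw [Finset.sum_congr rfl (fun x _ => hlogW x), Finset.sum_add_distrib, Finset.sum_const,
      nsmul_eq_mul, hcard', Finset.sum_comm]
  have hSlog : (2:ℝ)^n * ((m:ℝ) * Real.log (1/2))
        + (n:ℝ) * (A * Real.log (1/4) + ((2:ℝ)^n - A) * Real.log (3/4))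
      ≤ ∑ x : Fin n → Bool, Real.log (W x) := by
    rw [hSlogEq]
    have h1 := Finset.sum_le_sum (fun i (_ : i ∈ (Finset.univ : Finset (Fin n))) => hmarg i)
    rw [Finset.sum_const, nsmul_eq_mul, Finset.card_univ, Fintype.card_fin] at h1
    linarith
  have hmain : ((2:ℝ)^n)⁻¹ * ((2:ℝ)^n * ((m:ℝ) * Real.log (1/2))
        + (n:ℝ) * (A * Real.log (1/4) + ((2:ℝ)^n - A) * Real.log (3/4)))
      ≤ -((n:ℝ) * Real.log 2) := by
    calc ((2:ℝ)^n)⁻¹ * ((2:ℝ)^n * ((m:ℝ) * Real.log (1/2))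
          + (n:ℝ) * (A * Real.log (1/4) + ((2:ℝ)^n - A) * Real.log (3/4)))
        ≤ ((2:ℝ)^n)⁻¹ * ∑ x : Fin n → Bool, Real.log (W x) :=
          mul_le_mul_of_nonneg_left hSlog (by positivity)
      _ = ∑ x : Fin n → Bool, ((2:ℝ)^n)⁻¹ • Real.log (W x) := hLHS.symm
      _ ≤ Real.log (∑ x : Fin n → Bool, ((2:ℝ)^n)⁻¹ • W x) := hJ
      _ ≤ -((n:ℝ) * Real.log 2) := hRHS
  have hmain2 : (2:ℝ)^n * ((m:ℝ) * Real.log (1/2))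
        + (n:ℝ) * (A * Real.log (1/4) + ((2:ℝ)^n - A) * Real.log (3/4))
      ≤ -((n:ℝ) * Real.log 2) * (2:ℝ)^n := by
    have h2 := mul_le_mul_of_nonneg_left hmain (le_of_lt (show (0:ℝ) < (2:ℝ)^n by positivity))
    rw [← mul_assoc, mul_inv_cancel₀ (by positivity : ((2:ℝ)^n) ≠ 0), one_mul] at h2
    linarith
  -- plug in log values
  have hl2pos : 0 < Real.log 2 := Real.log_pos (by norm_num)
  have hlog4 : Real.log 4 = 2 * Real.log 2 := by
    rw [show (4:ℝ) = 2^2 by norm_num, Real.log_pow]; push_cast; ring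
  have hlog12 : Real.log (1/2) = -Real.log 2 := by rw [one_div, Real.log_inv]
  have hlog14 : Real.log (1/4) = -(2 * Real.log 2) := by rw [one_div, Real.log_inv, hlog4]
  have hlog34 : Real.log (3/4) = Real.log 3 - 2 * Real.log 2 := by
    rw [Real.log_div (by norm_num) (by norm_num), hlog4]
  rw [hlog12, hlog14, hlog34, hN4A] at hmain2
  have hdiv : -(4*(m:ℝ)*Real.log 2) + (n:ℝ)*(3*Real.log 3 - 8*Real.log 2)
      ≤ -(4*(n:ℝ)*Real.log 2) := by
    have hEq : A * (-(4*(m:ℝ)*Real.log 2) + (n:ℝ)*(3*Real.log 3 - 8*Real.log 2))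
        = 4*A*((m:ℝ)*(-Real.log 2))
          + (n:ℝ)*(A*(-(2*Real.log 2)) + (4*A - A)*(Real.log 3 - 2*Real.log 2)) := by ring
    have hEq2 : A * (-(4*(n:ℝ)*Real.log 2)) = -((n:ℝ)*Real.log 2)*(4*A) := by ring
    rw [← hEq, ← hEq2] at hmain2
    exact le_of_mul_le_mul_left hmain2 hApos
  have h125 : 198 * Real.log 2 ≤ 125 * Real.log 3 := log2_3_bound
  have hn0 : (0:ℝ) ≤ (n:ℝ) := Nat.cast_nonneg n
  have hcoef : (94/125 : ℝ) * Real.log 2 ≤ 3*Real.log 3 - 4*Real.log 2 := by linarith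
  have h1 : (n:ℝ) * ((94/125 : ℝ) * Real.log 2) ≤ (n:ℝ) * (3*Real.log 3 - 4*Real.log 2) :=
    mul_le_mul_of_nonneg_left hcoef hn0
  have hfinal : (0.188 * (n:ℝ)) * Real.log 2 ≤ (m:ℝ) * Real.log 2 := by nlinarith [hdiv, h1]
  exact le_of_mul_le_mul_right hfinal hl2pos
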